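/- For any p > 1 and any two probability measures μ, ν on the interval I = [0,1], the infimum of ∫_{I×I} |x−y|^p d|ρ|(x,y) over all finite signed measures ρ on I×I whose first marginal is μ and second marginal is ν equals 0. -/

import Mathlib

open MeasureTheory Finset
open scoped ENNReal NNReal

noncomputable def sc (n k : ℕ) (x : ↥(Set.Icc (0:ℝ) 1)) : ↥(Set.Icc (0:ℝ) 1) :=
  ⟨(1 - (min k n : ℝ)/n) * x.1, by
    have hx := x.2
    rcases Nat.eq_zero_or_pos n with h | h
    · subst h; simp [hx]
    · have hn : (0:ℝ) < n := by exact_mod_cast h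
      have h1 : (min k n : ℝ)/n ≤ 1 := by
        rw [div_le_one hn]
        exact_mod_cast Nat.min_le_right k n
      have h0 : (0:ℝ) ≤ (min k n : ℝ)/n := by positivity
      constructor
      · exact mul_nonneg (by linarith) hx.1
      · calc (1 - (min k n : ℝ)/n) * x.1 ≤ 1 * 1 :=
            mul_le_mul (by linarith) hx.2 hx.1 one_pos.le
          _ = 1 := one_mul 1⟩

lemma sc_continuous (n k : ℕ) : Continuous (sc n k) :=
  Continuous.subtype_mk (continuous_const.mul continuous_subtype_val) _

lemma sc_measurable (n k : ℕ) : Measurable (sc n k) := (sc_continuous n k).measurable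

lemma sc_zero {n : ℕ} (hn : 0 < n) : sc n 0 = id := by
  funext x; simp only [sc, id]; ext; simp

lemma sc_self {n : ℕ} (hn : 0 < n) : sc n n = fun _ => ⟨0, by simp⟩ := by
  have hn' : (n:ℝ) ≠ 0 := by exact_mod_cast hn.ne'
  funext x; simp only [sc]; ext; simp [hn', div_self hn']

lemma sc_val {n k : ℕ} (hk : k ≤ n) (x : ↥(Set.Icc (0:ℝ) 1)) :
    (sc n k x : ℝ) = (1 - (k:ℝ)/n) * x.1 := by
  have h : min k n = k := Nat.min_eq_left hk
  simp only [sc]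
  rw [← Nat.cast_min, h]

section plan
variable (μ ν : Measure ↥(Set.Icc (0:ℝ) 1)) [IsProbabilityMeasure μ] [IsProbabilityMeasure ν]
  (n : ℕ)

noncomputable def PP : Measure (↥(Set.Icc (0:ℝ) 1) × ↥(Set.Icc (0:ℝ) 1)) :=
  μ.map (fun x => (x, x))
    + (∑ k ∈ range n, μ.map (fun x => (sc n k x, sc n (k+1) x)))
    + (∑ k ∈ range n, ν.map (fun x => (sc n (k+1) x, sc n k x)))

noncomputable def NN : Measure (↥(Set.Icc (0:ℝ) 1) × ↥(Set.Icc (0:ℝ) 1)) :=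
  (∑ k ∈ range n, μ.map (fun x => (sc n k x, sc n k x)))
    + (∑ k ∈ range n, ν.map (fun x => (sc n (k+1) x, sc n (k+1) x)))

lemma my_map_finset_sum {α β ι : Type*} [MeasurableSpace α] [MeasurableSpace β]
    (s : Finset ι) (μ : ι → Measure α) {f : α → β}
    (hf : Measurable f) : (∑ i ∈ s, μ i).map f = ∑ i ∈ s, (μ i).map f := by
  classical
  induction s using Finset.induction with
  | empty => simp
  | insert _ _ h ih =>
    rw [Finset.sum_insert h, Finset.sum_insert h, Measure.map_add _ _ hf, ih]

instance : IsFiniteMeasure (PP μ ν n) := by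
  unfold PP; infer_instance

instance : IsFiniteMeasure (NN μ ν n) := by
  unfold NN; infer_instance

lemma PP_fst : (PP μ ν n).map Prod.fst
    = μ + ((∑ k ∈ range n, μ.map (sc n k)) + (∑ k ∈ range n, ν.map (sc n (k+1)))) := by
  rw [PP, Measure.map_add _ _ measurable_fst, Measure.map_add _ _ measurable_fst,
    my_map_finset_sum _ _ measurable_fst, my_map_finset_sum _ _ measurable_fst]
  have h0 : (μ.map (fun x => (x, x))).map Prod.fst = μ := by
    have hdiag : Measurable (fun x : ↥(Set.Icc (0:ℝ) 1) => (x, x)) := by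
      exact measurable_id.prodMk measurable_id
    rw [Measure.map_map measurable_fst hdiag]
    exact Measure.map_id'
  rw [h0]
  have h1 : ∀ k, (μ.map (fun x => (sc n k x, sc n (k+1) x))).map Prod.fst = μ.map (sc n k) :=
    fun k => Measure.map_map measurable_fst
      ((sc_measurable n k).prodMk (sc_measurable n (k+1)))
  have h2 : ∀ k, (ν.map (fun x => (sc n (k+1) x, sc n k x))).map Prod.fst = ν.map (sc n (k+1)) :=
    fun k => Measure.map_map measurable_fst
      ((sc_measurable n (k+1)).prodMk (sc_measurable n k))
  simp_rw [h1, h2]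
  abel

lemma NN_fst : (NN μ ν n).map Prod.fst
    = (∑ k ∈ range n, μ.map (sc n k)) + (∑ k ∈ range n, ν.map (sc n (k+1))) := by
  rw [NN, Measure.map_add _ _ measurable_fst,
    my_map_finset_sum _ _ measurable_fst, my_map_finset_sum _ _ measurable_fst]
  have h1 : ∀ k, (μ.map (fun x => (sc n k x, sc n k x))).map Prod.fst = μ.map (sc n k) :=
    fun k => Measure.map_map measurable_fst
      ((sc_measurable n k).prodMk (sc_measurable n k))
  have h2 : ∀ k, (ν.map (fun x => (sc n (k+1) x, sc n (k+1) x))).map Prod.fst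
      = ν.map (sc n (k+1)) :=
    fun k => Measure.map_map measurable_fst
      ((sc_measurable n (k+1)).prodMk (sc_measurable n (k+1)))
  simp_rw [h1, h2]

lemma PP_snd : (PP μ ν n).map Prod.snd
    = μ + ((∑ k ∈ range n, μ.map (sc n (k+1))) + (∑ k ∈ range n, ν.map (sc n k))) := by
  rw [PP, Measure.map_add _ _ measurable_snd, Measure.map_add _ _ measurable_snd,
    my_map_finset_sum _ _ measurable_snd, my_map_finset_sum _ _ measurable_snd]
  have h0 : (μ.map (fun x => (x, x))).map Prod.snd = μ := by
    have hdiag : Measurable (fun x : ↥(Set.Icc (0:ℝ) 1) => (x, x)) := by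
      exact measurable_id.prodMk measurable_id
    rw [Measure.map_map measurable_snd hdiag]
    exact Measure.map_id'
  rw [h0]
  have h1 : ∀ k, (μ.map (fun x => (sc n k x, sc n (k+1) x))).map Prod.snd = μ.map (sc n (k+1)) :=
    fun k => Measure.map_map measurable_snd
      ((sc_measurable n k).prodMk (sc_measurable n (k+1)))
  have h2 : ∀ k, (ν.map (fun x => (sc n (k+1) x, sc n k x))).map Prod.snd = ν.map (sc n k) :=
    fun k => Measure.map_map measurable_snd
      ((sc_measurable n (k+1)).prodMk (sc_measurable n k))
  simp_rw [h1, h2]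
  abel

lemma NN_snd : (NN μ ν n).map Prod.snd
    = (∑ k ∈ range n, μ.map (sc n k)) + (∑ k ∈ range n, ν.map (sc n (k+1))) := by
  rw [NN, Measure.map_add _ _ measurable_snd,
    my_map_finset_sum _ _ measurable_snd, my_map_finset_sum _ _ measurable_snd]
  have h1 : ∀ k, (μ.map (fun x => (sc n k x, sc n k x))).map Prod.snd = μ.map (sc n k) :=
    fun k => Measure.map_map measurable_snd
      ((sc_measurable n k).prodMk (sc_measurable n k))
  have h2 : ∀ k, (ν.map (fun x => (sc n (k+1) x, sc n (k+1) x))).map Prod.snd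
      = ν.map (sc n (k+1)) :=
    fun k => Measure.map_map measurable_snd
      ((sc_measurable n (k+1)).prodMk (sc_measurable n (k+1)))
  simp_rw [h1, h2]

lemma PP_snd_eq (hn : 0 < n) : (PP μ ν n).map Prod.snd = ν + (NN μ ν n).map Prod.snd := by
  rw [PP_snd, NN_snd]
  have hμ0 : μ.map (sc n 0) = μ := by rw [sc_zero hn, Measure.map_id]
  have hν0 : ν.map (sc n 0) = ν := by rw [sc_zero hn, Measure.map_id]
  have key : μ.map (sc n n) = ν.map (sc n n) := by
    rw [sc_self hn, Measure.map_const, Measure.map_const, measure_univ, measure_univ]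
  have A : (∑ k ∈ range n, μ.map (sc n (k+1))) + μ.map (sc n 0)
      = (∑ k ∈ range n, μ.map (sc n k)) + μ.map (sc n n) := by
    rw [← Finset.sum_range_succ' (fun k => μ.map (sc n k)) n, Finset.sum_range_succ]
  have B : (∑ k ∈ range n, ν.map (sc n (k+1))) + ν.map (sc n 0)
      = (∑ k ∈ range n, ν.map (sc n k)) + ν.map (sc n n) := by
    rw [← Finset.sum_range_succ' (fun k => ν.map (sc n k)) n, Finset.sum_range_succ]
  rw [hμ0] at A
  rw [hν0] at B
  calc μ + ((∑ k ∈ range n, μ.map (sc n (k+1))) + (∑ k ∈ range n, ν.map (sc n k)))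
      = ((∑ k ∈ range n, μ.map (sc n (k+1))) + μ) + (∑ k ∈ range n, ν.map (sc n k)) := by
        abel
    _ = ((∑ k ∈ range n, μ.map (sc n k)) + μ.map (sc n n)) + (∑ k ∈ range n, ν.map (sc n k)) := by
        rw [A]
    _ = (∑ k ∈ range n, μ.map (sc n k)) + ((∑ k ∈ range n, ν.map (sc n k)) + ν.map (sc n n)) := by
        rw [key]; abel
    _ = (∑ k ∈ range n, μ.map (sc n k)) + ((∑ k ∈ range n, ν.map (sc n (k+1))) + ν) := by
        rw [B]
    _ = ν + ((∑ k ∈ range n, μ.map (sc n k)) + (∑ k ∈ range n, ν.map (sc n (k+1)))) := by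
        abel

lemma PP_fst_eq : (PP μ ν n).map Prod.fst = μ + (NN μ ν n).map Prod.fst := by
  rw [PP_fst, NN_fst]

end plan

section signedpart
variable {α β : Type*} [MeasurableSpace α] [MeasurableSpace β]

lemma my_toSignedMeasure_map (κ : Measure α) [IsFiniteMeasure κ] {f : α → β} (hf : Measurable f) :
    VectorMeasure.map κ.toSignedMeasure f = (κ.map f).toSignedMeasure := by
  ext i hi
  rw [VectorMeasure.map_apply _ hf hi,
    Measure.toSignedMeasure_apply_measurable (hf hi),
    Measure.toSignedMeasure_apply_measurable hi, map_measureReal_apply hf hi]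

lemma my_map_sub (u v : SignedMeasure α) (f : α → β) :
    VectorMeasure.map (u - v) f = VectorMeasure.map u f - VectorMeasure.map v f := by
  have h := VectorMeasure.map_add u (-v) f
  have h2 : VectorMeasure.map (-v) f = -VectorMeasure.map v f := by
    have := VectorMeasure.map_smul (v := v) (f := f) (-1 : ℝ)
    convert this using 2 <;> exact (neg_one_smul ℝ _).symm
  rw [sub_eq_add_neg, h, h2, ← sub_eq_add_neg]

lemma my_tv_le (P N : Measure α) [IsFiniteMeasure P] [IsFiniteMeasure N] :
    (P.toSignedMeasure - N.toSignedMeasure).totalVariation ≤ P + N := by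
  set s := P.toSignedMeasure - N.toSignedMeasure with hs
  obtain ⟨i, hi₁, hi₂, hi₃, hpos, hneg⟩ := s.toJordanDecomposition_spec
  rw [Measure.le_iff]
  intro k hk
  have hp' : s.toJordanDecomposition.posPart k = ENNReal.ofReal (s (i ∩ k)) := by
    rw [hpos, SignedMeasure.toMeasureOfZeroLE_apply _ hi₂ hi₁ hk]
    congr 1
    exact (Real.toNNReal_of_nonneg _).symm
  have hn' : s.toJordanDecomposition.negPart k = ENNReal.ofReal (-s (iᶜ ∩ k)) := by
    rw [hneg, SignedMeasure.toMeasureOfLEZero_apply _ hi₃ hi₁.compl hk]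
    congr 1
    exact (Real.toNNReal_of_nonneg _).symm
  rw [SignedMeasure.totalVariation, Measure.add_apply, hp', hn', Measure.add_apply]
  have hsP : ∀ (j : Set α), MeasurableSet j → j ⊆ k → ENNReal.ofReal (s j) ≤ P k := by
    intro j hj hjk
    have : s j = (P j).toReal - (N j).toReal := Measure.toSignedMeasure_sub_apply hj
    rw [this]
    calc ENNReal.ofReal ((P j).toReal - (N j).toReal) ≤ ENNReal.ofReal (P j).toReal := by
          exact ENNReal.ofReal_le_ofReal (by simp [ENNReal.toReal_nonneg])
      _ = P j := ENNReal.ofReal_toReal (measure_ne_top _ _)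
      _ ≤ P k := measure_mono hjk
  have hsN : ∀ (j : Set α), MeasurableSet j → j ⊆ k → ENNReal.ofReal (-(s j)) ≤ N k := by
    intro j hj hjk
    have : s j = (P j).toReal - (N j).toReal := Measure.toSignedMeasure_sub_apply hj
    rw [this]
    calc ENNReal.ofReal (-((P j).toReal - (N j).toReal)) ≤ ENNReal.ofReal (N j).toReal := by
          exact ENNReal.ofReal_le_ofReal (by simp [ENNReal.toReal_nonneg])
      _ = N j := ENNReal.ofReal_toReal (measure_ne_top _ _)
      _ ≤ N k := measure_mono hjk
  exact add_le_add (hsP _ (hi₁.inter hk) Set.inter_subset_right)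
    (hsN _ (hi₁.compl.inter hk) Set.inter_subset_right)

end signedpart

section main
variable (μ ν : Measure ↥(Set.Icc (0:ℝ) 1)) [IsProbabilityMeasure μ] [IsProbabilityMeasure ν]

noncomputable def rho (n : ℕ) : SignedMeasure (↥(Set.Icc (0:ℝ) 1) × ↥(Set.Icc (0:ℝ) 1)) :=
  (PP μ ν n).toSignedMeasure - (NN μ ν n).toSignedMeasure

lemma rho_fst (n : ℕ) :
    VectorMeasure.map (rho μ ν n) Prod.fst = μ.toSignedMeasure := by
  haveI : IsFiniteMeasure ((NN μ ν n).map Prod.fst) :=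
    Measure.isFiniteMeasure_map _ _
  rw [rho, my_map_sub, my_toSignedMeasure_map _ measurable_fst,
    my_toSignedMeasure_map _ measurable_fst,
    Measure.toSignedMeasure_congr (PP_fst_eq μ ν n), Measure.toSignedMeasure_add]
  abel

lemma rho_snd {n : ℕ} (hn : 0 < n) :
    VectorMeasure.map (rho μ ν n) Prod.snd = ν.toSignedMeasure := by
  haveI : IsFiniteMeasure ((NN μ ν n).map Prod.snd) :=
    Measure.isFiniteMeasure_map _ _
  rw [rho, my_map_sub, my_toSignedMeasure_map _ measurable_snd,
    my_toSignedMeasure_map _ measurable_snd,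
    Measure.toSignedMeasure_congr (PP_snd_eq μ ν n hn), Measure.toSignedMeasure_add]
  abel

lemma cost_bound (p : ℝ) (hp : 1 < p) {n : ℕ} (hn : 0 < n) :
    ∫ z, |(z.1 : ℝ) - (z.2 : ℝ)| ^ p ∂(rho μ ν n).totalVariation
      ≤ 2 * (n : ℝ) * ((1 : ℝ)/n) ^ p := by
  haveI : CompactSpace ↥(Set.Icc (0:ℝ) 1) := by infer_instance
  set f : ↥(Set.Icc (0:ℝ) 1) × ↥(Set.Icc (0:ℝ) 1) → ℝ :=
    fun z => |(z.1 : ℝ) - (z.2 : ℝ)| ^ p with hf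
  have hf_cont : Continuous f := by
    apply Continuous.rpow_const
    · exact ((continuous_subtype_val.comp continuous_fst).sub
        (continuous_subtype_val.comp continuous_snd)).abs
    · exact fun _ => Or.inr (by linarith)
  have hf_nonneg : ∀ z, 0 ≤ f z := fun z => Real.rpow_nonneg (abs_nonneg _) p
  have hf_int : ∀ (κ : Measure (↥(Set.Icc (0:ℝ) 1) × ↥(Set.Icc (0:ℝ) 1))),
      IsFiniteMeasure κ → Integrable f κ := fun κ hκ =>
    hf_cont.integrable_of_hasCompactSupport (HasCompactSupport.of_compactSpace f)
  have hdiagzero : ∀ (κ : Measure ↥(Set.Icc (0:ℝ) 1))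
      (g : ↥(Set.Icc (0:ℝ) 1) → ↥(Set.Icc (0:ℝ) 1)), Measurable g →
      ∫ z, f z ∂(κ.map (fun x => (g x, g x))) = 0 := by
    intro κ g hg
    rw [integral_map (hg.prodMk hg).aemeasurable hf_cont.aestronglyMeasurable]
    have : ∀ x, f (g x, g x) = 0 := by
      intro x
      simp only [hf, sub_self, abs_zero]
      exact Real.zero_rpow (by linarith)
    simp [this]
  have hcross : ∀ (κ : Measure ↥(Set.Icc (0:ℝ) 1)) (_ : IsProbabilityMeasure κ) (k l : ℕ),
      k ≤ n → l ≤ n → (k = l + 1 ∨ l = k + 1) →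
      ∫ z, f z ∂(κ.map (fun x => (sc n k x, sc n l x))) ≤ ((1:ℝ)/n) ^ p := by
    intro κ hκ k l hkn hln hkl
    rw [integral_map ((sc_measurable n k).prodMk (sc_measurable n l)).aemeasurable
      hf_cont.aestronglyMeasurable]
    have hbound : ∀ x, f (sc n k x, sc n l x) ≤ ((1:ℝ)/n) ^ p := by
      intro x
      have hx := x.2
      have hnn : (0:ℝ) < n := by exact_mod_cast hn
      have hval : |(sc n k x : ℝ) - (sc n l x : ℝ)| = x.1 / n := by
        rw [sc_val hkn, sc_val hln]
        have he : (1 - (k:ℝ)/n)*x.1 - (1 - (l:ℝ)/n)*x.1 = ((l:ℝ)-(k:ℝ))*x.1/n := by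
          have hnn : (n:ℝ) ≠ 0 := by
            have : (0:ℝ) < n := by exact_mod_cast hn
            exact this.ne'
          field_simp
          ring
        rw [he]
        have hd : ((l:ℝ) - (k:ℝ)) = 1 ∨ ((l:ℝ) - (k:ℝ)) = -1 := by
          rcases hkl with h | h <;> subst h
          · right; push_cast; ring
          · left; push_cast; ring
        rcases hd with h | h <;> rw [h]
        · rw [one_mul, abs_of_nonneg (div_nonneg x.2.1 (Nat.cast_nonneg n))]
        · rw [neg_one_mul, neg_div, abs_neg, abs_of_nonneg (div_nonneg x.2.1 (Nat.cast_nonneg n))]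
      simp only [hf]
      rw [hval]
      apply Real.rpow_le_rpow (div_nonneg x.2.1 (Nat.cast_nonneg n)) _ (by linarith)
      rw [div_le_div_iff₀ hnn hnn]
      nlinarith [hx.2, hnn]
    calc ∫ x, f (sc n k x, sc n l x) ∂κ ≤ ∫ _, ((1:ℝ)/n) ^ p ∂κ := by
          apply integral_mono_of_nonneg
          · exact Filter.Eventually.of_forall (fun x => hf_nonneg _)
          · exact integrable_const _
          · exact Filter.Eventually.of_forall hbound
      _ = ((1:ℝ)/n) ^ p := by simp
  have step1 : ∫ z, f z ∂(rho μ ν n).totalVariation ≤ ∫ z, f z ∂(PP μ ν n + NN μ ν n) := by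
    apply integral_mono_measure (my_tv_le _ _)
    · exact Filter.Eventually.of_forall hf_nonneg
    · exact hf_int _ inferInstance
  have step2 : ∫ z, f z ∂(PP μ ν n + NN μ ν n)
      = ∫ z, f z ∂(PP μ ν n) + ∫ z, f z ∂(NN μ ν n) := by
    exact integral_add_measure (hf_int _ inferInstance) (hf_int _ inferInstance)
  have hPP : ∫ z, f z ∂(PP μ ν n) ≤ 2 * (n:ℝ) * ((1:ℝ)/n) ^ p := by
    rw [PP]
    rw [integral_add_measure (hf_int _ inferInstance) (hf_int _ inferInstance),
      integral_add_measure (hf_int _ inferInstance) (hf_int _ inferInstance)]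
    have hdiag_pair : Measurable (fun x : ↥(Set.Icc (0:ℝ) 1) => (x, x)) := by
      exact measurable_id.prodMk measurable_id
    have hzero1 : ∫ z, f z ∂(μ.map (fun x => (x, x))) = 0 := by
      rw [integral_map hdiag_pair.aemeasurable hf_cont.aestronglyMeasurable]
      have hz : ∀ x : ↥(Set.Icc (0:ℝ) 1), f (x, x) = 0 := fun x => by
        simp only [hf, sub_self, abs_zero]; exact Real.zero_rpow (by linarith)
      simp [hz]
    rw [hzero1]
    rw [integral_finset_sum_measure (fun i _ => hf_int _ inferInstance),
      integral_finset_sum_measure (fun i _ => hf_int _ inferInstance)]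
    have b1 : ∑ k ∈ range n, ∫ z, f z ∂(μ.map (fun x => (sc n k x, sc n (k+1) x)))
        ≤ (n:ℝ) * ((1:ℝ)/n) ^ p := by
      calc _ ≤ ∑ __ ∈ range n, ((1:ℝ)/n) ^ p :=
            Finset.sum_le_sum (fun k hk => hcross μ inferInstance k (k+1)
              (Nat.le_of_lt (Finset.mem_range.mp hk)) (Finset.mem_range.mp hk)
              (Or.inr rfl))
        _ = (n:ℝ) * ((1:ℝ)/n) ^ p := by
            rw [Finset.sum_const, Finset.card_range, nsmul_eq_mul]
    have b2 : ∑ k ∈ range n, ∫ z, f z ∂(ν.map (fun x => (sc n (k+1) x, sc n k x)))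
        ≤ (n:ℝ) * ((1:ℝ)/n) ^ p := by
      calc _ ≤ ∑ __ ∈ range n, ((1:ℝ)/n) ^ p :=
            Finset.sum_le_sum (fun k hk => hcross ν inferInstance (k+1) k
              (Finset.mem_range.mp hk) (Nat.le_of_lt (Finset.mem_range.mp hk))
              (Or.inl rfl))
        _ = (n:ℝ) * ((1:ℝ)/n) ^ p := by
            rw [Finset.sum_const, Finset.card_range, nsmul_eq_mul]
    linarith
  have hNN : ∫ z, f z ∂(NN μ ν n) = 0 := by
    rw [NN, integral_add_measure (hf_int _ inferInstance) (hf_int _ inferInstance),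
      integral_finset_sum_measure (fun i _ => hf_int _ inferInstance),
      integral_finset_sum_measure (fun i _ => hf_int _ inferInstance)]
    have z1 : ∀ k ∈ range n,
        ∫ z, f z ∂(μ.map (fun x => (sc n k x, sc n k x))) = 0 :=
      fun k _ => hdiagzero μ (sc n k) (sc_measurable n k)
    have z2 : ∀ k ∈ range n,
        ∫ z, f z ∂(ν.map (fun x => (sc n (k+1) x, sc n (k+1) x))) = 0 :=
      fun k _ => hdiagzero ν (sc n (k+1)) (sc_measurable n (k+1))
    rw [Finset.sum_congr rfl z1, Finset.sum_congr rfl z2]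
    simp
  calc ∫ z, f z ∂(rho μ ν n).totalVariation
      ≤ ∫ z, f z ∂(PP μ ν n + NN μ ν n) := step1
    _ = ∫ z, f z ∂(PP μ ν n) + ∫ z, f z ∂(NN μ ν n) := step2
    _ ≤ 2 * (n:ℝ) * ((1:ℝ)/n) ^ p + 0 := by rw [hNN]; linarith
    _ = 2 * (n:ℝ) * ((1:ℝ)/n) ^ p := by ring

end main

/-- The "signed p-Wasserstein distance" between any two probability measures on `[0,1]`
is zero: the infimum over signed transport plans `ρ` (finite signed measures on
`[0,1] × [0,1]` with marginals `μ` and `ν`) of `∫ |x - y|^p d|ρ|` equals `0`. -/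
theorem signed_Wp_zero (p : ℝ) (hp : 1 < p)
    (μ ν : Measure ↥(Set.Icc (0:ℝ) 1))
    [IsProbabilityMeasure μ] [IsProbabilityMeasure ν] :
    sInf { c : ℝ | ∃ ρ : SignedMeasure (↥(Set.Icc (0:ℝ) 1) × ↥(Set.Icc (0:ℝ) 1)),
        VectorMeasure.map ρ Prod.fst = μ.toSignedMeasure ∧
        VectorMeasure.map ρ Prod.snd = ν.toSignedMeasure ∧
        c = ∫ z, |(z.1 : ℝ) - (z.2 : ℝ)| ^ p ∂ρ.totalVariation } = 0 := by
  set S := { c : ℝ | ∃ ρ : SignedMeasure (↥(Set.Icc (0:ℝ) 1) × ↥(Set.Icc (0:ℝ) 1)),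
        VectorMeasure.map ρ Prod.fst = μ.toSignedMeasure ∧
        VectorMeasure.map ρ Prod.snd = ν.toSignedMeasure ∧
        c = ∫ z, |(z.1 : ℝ) - (z.2 : ℝ)| ^ p ∂ρ.totalVariation } with hS
  have hmem : ∀ n : ℕ, 0 < n →
      (∫ z, |(z.1 : ℝ) - (z.2 : ℝ)| ^ p ∂(rho μ ν n).totalVariation) ∈ S :=
    fun n hn => ⟨rho μ ν n, rho_fst μ ν n, rho_snd μ ν hn, rfl⟩
  have hne : S.Nonempty := ⟨_, hmem 1 one_pos⟩
  have hlb : ∀ c ∈ S, (0:ℝ) ≤ c := by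
    rintro c ⟨ρ, -, -, rfl⟩
    exact integral_nonneg fun z => Real.rpow_nonneg (abs_nonneg _) _
  have hbdd : BddBelow S := ⟨0, hlb⟩
  refine le_antisymm ?_ (le_csInf hne hlb)
  by_contra hcon
  push_neg at hcon
  have htend2 : Filter.Tendsto (fun n : ℕ => 2 * ((n:ℝ)) ^ (1 - p))
      Filter.atTop (nhds 0) := by
    have h1 : Filter.Tendsto (fun n : ℕ => ((n:ℝ)) ^ (-(p-1)))
        Filter.atTop (nhds 0) :=
      (tendsto_rpow_neg_atTop (by linarith : (0:ℝ) < p - 1)).comp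
        tendsto_natCast_atTop_atTop
    have h2 := h1.const_mul (2:ℝ)
    rw [mul_zero] at h2
    convert h2 using 2
    ring_nf
  have heq : (fun n : ℕ => 2 * (n:ℝ) * ((1:ℝ)/n) ^ p)
      =ᶠ[Filter.atTop] (fun n : ℕ => 2 * ((n:ℝ)) ^ (1 - p)) := by
    filter_upwards [Filter.eventually_gt_atTop 0] with n hn
    have hnn : (0:ℝ) < n := by exact_mod_cast hn
    have h3 : ((1:ℝ)/n) ^ p = (n:ℝ) ^ (-p) := by
      rw [one_div, ← Real.rpow_neg_one (n:ℝ), ← Real.rpow_mul hnn.le]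
      ring_nf
    calc 2 * (n:ℝ) * ((1:ℝ)/n) ^ p = 2 * ((n:ℝ)^(1:ℝ) * (n:ℝ)^(-p)) := by
          rw [h3, Real.rpow_one]; ring
      _ = 2 * ((n:ℝ)) ^ (1 - p) := by rw [← Real.rpow_add hnn]; ring_nf
  have htend : Filter.Tendsto (fun n : ℕ => 2 * (n:ℝ) * ((1:ℝ)/n) ^ p)
      Filter.atTop (nhds 0) := Filter.Tendsto.congr' heq.symm htend2
  have hev : ∀ᶠ n : ℕ in Filter.atTop,
      2 * (n:ℝ) * ((1:ℝ)/n) ^ p < sInf S := htend.eventually (gt_mem_nhds hcon)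
  obtain ⟨n, hlt, hn0⟩ := (hev.and (Filter.eventually_gt_atTop 0)).exists
  have hc := csInf_le hbdd (hmem n hn0)
  have hb := cost_bound μ ν p hp hn0
  linarith
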